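/- Let L : ℝ^N → [0,∞) be measurable and satisfy an exponentiated norm bound: there exist constants c₀ > 0 and c₁ > 0 such that L(η) ≤ c₀ exp(−c₁ ‖η‖₂) for all η ∈ ℝ^N. Let X be a real N×p matrix, let λ > 0, let d₁,…,d_K ∈ ℝ^p, and let F₁,…,F_L be symmetric positive semidefinite real p×p matrices with stacked matrix D̄. If the stacked (N+K+Lp)×p matrix obtained by stacking X on top of D̄ has rank p, then the posterior kernel β ↦ L(Xβ) · k(β) is Lebesgue-integrable over ℝ^p, where k is the structured sparse kernel. -/

import Mathlib

open MeasureTheory Matrix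

lemma integrable_exp_neg_mul_abs' {a : ℝ} (ha : 0 < a) :
    Integrable (fun x : ℝ => Real.exp (-(a * |x|))) := by
  have h0 : IntegrableOn (fun x : ℝ => Real.exp (-(a * |x|))) (Set.Ioi 0) := by
    refine (exp_neg_integrableOn_Ioi 0 ha).congr_fun (fun x hx => ?_) measurableSet_Ioi
    rw [abs_of_pos hx, ← neg_mul]
  rw [← integrableOn_univ, ← @Set.Iio_union_Ici _ _ (0 : ℝ), integrableOn_union,
    integrableOn_Ici_iff_integrableOn_Ioi]
  refine ⟨?_, h0⟩
  rw [← (Measure.measurePreserving_neg (volume : Measure ℝ)).integrableOn_comp_preimage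
      (Homeomorph.neg ℝ).measurableEmbedding]
  simpa [Function.comp_def, abs_neg] using h0

lemma exists_pos_forall_mul_norm_le' {q : ℕ} {f : (Fin q → ℝ) → ℝ}
    (hcont : Continuous f) (hnonneg : ∀ β, 0 ≤ f β)
    (hhom : ∀ (t : ℝ), 0 ≤ t → ∀ β, f (t • β) = t * f β)
    (hzero : ∀ β, f β = 0 → β = 0) :
    ∃ ε > 0, ∀ β, ε * ‖β‖ ≤ f β := by
  rcases Nat.eq_zero_or_pos q with hq | hq
  · subst hq
    haveI : Subsingleton (Fin 0 → ℝ) := ⟨fun a b => funext fun i => i.elim0⟩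
    refine ⟨1, one_pos, fun β => ?_⟩
    rw [Subsingleton.elim β 0]
    rw [norm_zero, mul_zero]; exact hnonneg 0
  · haveI : Nonempty (Fin q) := ⟨⟨0, hq⟩⟩
    have hsph : (Metric.sphere (0 : Fin q → ℝ) 1).Nonempty :=
      NormedSpace.sphere_nonempty.mpr zero_le_one
    obtain ⟨β₀, hβ₀, hmin⟩ :=
      (isCompact_sphere (0 : Fin q → ℝ) 1).exists_isMinOn hsph hcont.continuousOn
    have hβ₀norm : ‖β₀‖ = 1 := by simpa using hβ₀
    have hε : 0 < f β₀ := by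
      rcases lt_or_eq_of_le (hnonneg β₀) with h | h
      · exact h
      · exfalso
        have := hzero β₀ h.symm
        rw [this] at hβ₀norm
        simp at hβ₀norm
    refine ⟨f β₀, hε, fun β => ?_⟩
    rcases eq_or_ne β 0 with rfl | hne
    · simpa using hnonneg 0
    · have ht : 0 < ‖β‖ := norm_pos_iff.mpr hne
      have hmem : ‖β‖⁻¹ • β ∈ Metric.sphere (0 : Fin q → ℝ) 1 := by
        simp [norm_smul, abs_of_pos (inv_pos.mpr ht), inv_mul_cancel₀ ht.ne']
      have : f β = ‖β‖ * f (‖β‖⁻¹ • β) := by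
        rw [← hhom ‖β‖ ht.le, smul_smul, mul_inv_cancel₀ ht.ne', one_smul]
      rw [this, mul_comm (f β₀)]
      exact mul_le_mul_of_nonneg_left (hmin hmem) ht.le

/-- Sufficiency: if the likelihood satisfies an exponentiated norm bound and the augmented
design (X stacked on D̄) has full column rank, the posterior kernel is integrable over ℝ^p. -/
theorem posterior_proper_of_ENB_and_full_rank
    (N p K L : ℕ) (Lik : (Fin N → ℝ) → ℝ)
    (hLik_meas : Measurable Lik) (hLik_nonneg : ∀ η, 0 ≤ Lik η)
    (c₀ c₁ : ℝ) (hc₀ : 0 < c₀) (hc₁ : 0 < c₁)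
    (hENB : ∀ η : Fin N → ℝ, Lik η ≤ c₀ * Real.exp (-(c₁ * Real.sqrt (∑ i, η i ^ 2))))
    (X : Matrix (Fin N) (Fin p) ℝ) (lam : ℝ) (hlam : 0 < lam)
    (d : Fin K → (Fin p → ℝ))
    (F : Fin L → Matrix (Fin p) (Fin p) ℝ)
    (hFsymm : ∀ ℓ, (F ℓ).IsSymm)
    (hFpsd : ∀ ℓ, (F ℓ).PosSemidef)
    (hrank : (Matrix.of (Sum.elim (fun n => X n)
        (Sum.elim d (fun li : Fin L × Fin p => F li.1 li.2)))).rank = p) :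
    Integrable (fun β : Fin p → ℝ =>
      Lik (X *ᵥ β) *
        Real.exp (-(lam * ((∑ k, |d k ⬝ᵥ β|) +
          ∑ ℓ, Real.sqrt (β ⬝ᵥ (F ℓ) *ᵥ β))))) volume := by
  set M : Matrix (Fin N ⊕ (Fin K ⊕ Fin L × Fin p)) (Fin p) ℝ :=
    Matrix.of (Sum.elim (fun n => X n)
      (Sum.elim d (fun li : Fin L × Fin p => F li.1 li.2))) with hM
  -- injectivity from the rank condition
  have hinj : Function.Injective M.mulVecLin := by
    rw [← LinearMap.ker_eq_bot]
    have h1 := LinearMap.finrank_range_add_finrank_ker M.mulVecLin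
    rw [Module.finrank_pi] at h1
    have h2 : Module.finrank ℝ (LinearMap.ker M.mulVecLin) = 0 := by
      have hr : M.rank = Module.finrank ℝ (LinearMap.range M.mulVecLin) := rfl
      simp only [Fintype.card_fin] at h1
      omega
    exact Submodule.finrank_eq_zero.mp h2
  set f : (Fin p → ℝ) → ℝ := fun β =>
    c₁ * Real.sqrt (∑ i, (X *ᵥ β) i ^ 2) + lam * ((∑ k, |d k ⬝ᵥ β|) +
      ∑ ℓ, Real.sqrt (β ⬝ᵥ (F ℓ) *ᵥ β)) with hf
  have hcont : Continuous f := by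
    simp only [hf, Matrix.mulVec, dotProduct]
    fun_prop
  have hnonneg : ∀ β, 0 ≤ f β := by
    intro β
    refine add_nonneg (mul_nonneg hc₁.le (Real.sqrt_nonneg _))
      (mul_nonneg hlam.le (add_nonneg (Finset.sum_nonneg fun _ _ => abs_nonneg _)
        (Finset.sum_nonneg fun _ _ => Real.sqrt_nonneg _)))
  have hhom : ∀ (t : ℝ), 0 ≤ t → ∀ β, f (t • β) = t * f β := by
    intro t ht β
    have e1 : Real.sqrt (∑ i, (X *ᵥ (t • β)) i ^ 2) = t * Real.sqrt (∑ i, (X *ᵥ β) i ^ 2) := by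
      rw [Matrix.mulVec_smul]
      simp only [Pi.smul_apply, smul_eq_mul, mul_pow, ← Finset.mul_sum]
      rw [Real.sqrt_mul (sq_nonneg t), Real.sqrt_sq ht]
    have e2 : ∀ k, |d k ⬝ᵥ (t • β)| = t * |d k ⬝ᵥ β| := fun k => by
      rw [dotProduct_smul, smul_eq_mul, abs_mul, abs_of_nonneg ht]
    have e3 : ∀ ℓ, Real.sqrt ((t • β) ⬝ᵥ (F ℓ) *ᵥ (t • β)) =
        t * Real.sqrt (β ⬝ᵥ (F ℓ) *ᵥ β) := by
      intro ℓ
      rw [Matrix.mulVec_smul, dotProduct_smul, smul_dotProduct, smul_eq_mul, smul_eq_mul,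
        ← mul_assoc, ← sq, Real.sqrt_mul (sq_nonneg t), Real.sqrt_sq ht]
    simp only [hf, e1, e2, e3, ← Finset.mul_sum]
    ring
  have hzero : ∀ β, f β = 0 → β = 0 := by
    intro β hβ
    have hs1 : 0 ≤ c₁ * Real.sqrt (∑ i, (X *ᵥ β) i ^ 2) :=
      mul_nonneg hc₁.le (Real.sqrt_nonneg _)
    have hs2 : 0 ≤ lam * ((∑ k, |d k ⬝ᵥ β|) + ∑ ℓ, Real.sqrt (β ⬝ᵥ (F ℓ) *ᵥ β)) :=
      mul_nonneg hlam.le (add_nonneg (Finset.sum_nonneg fun _ _ => abs_nonneg _)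
        (Finset.sum_nonneg fun _ _ => Real.sqrt_nonneg _))
    obtain ⟨h1, h2⟩ := (add_eq_zero_iff_of_nonneg hs1 hs2).mp hβ
    have hXβ : ∀ n, (X *ᵥ β) n = 0 := by
      have hsq : Real.sqrt (∑ i, (X *ᵥ β) i ^ 2) = 0 := by
        rcases mul_eq_zero.mp h1 with h | h
        · exact absurd h hc₁.ne'
        · exact h
      have hsum : (∑ i, (X *ᵥ β) i ^ 2) = 0 :=
        (Real.sqrt_eq_zero (Finset.sum_nonneg fun _ _ => sq_nonneg _)).mp hsq
      intro n
      have := (Finset.sum_eq_zero_iff_of_nonneg (fun i _ => sq_nonneg ((X *ᵥ β) i))).mp hsum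
        n (Finset.mem_univ n)
      exact (pow_eq_zero_iff two_ne_zero).mp this
    have h2' : (∑ k, |d k ⬝ᵥ β|) + ∑ ℓ, Real.sqrt (β ⬝ᵥ (F ℓ) *ᵥ β) = 0 := by
      rcases mul_eq_zero.mp h2 with h | h
      · exact absurd h hlam.ne'
      · exact h
    obtain ⟨h3, h4⟩ := (add_eq_zero_iff_of_nonneg
      (Finset.sum_nonneg fun _ _ => abs_nonneg _)
      (Finset.sum_nonneg fun _ _ => Real.sqrt_nonneg _)).mp h2'
    have hdβ : ∀ k, d k ⬝ᵥ β = 0 := by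
      intro k
      have := (Finset.sum_eq_zero_iff_of_nonneg (fun k _ => abs_nonneg (d k ⬝ᵥ β))).mp h3
        k (Finset.mem_univ k)
      exact abs_eq_zero.mp this
    have hFβ : ∀ ℓ, (F ℓ) *ᵥ β = 0 := by
      intro ℓ
      have hsq := (Finset.sum_eq_zero_iff_of_nonneg
        (fun ℓ _ => Real.sqrt_nonneg (β ⬝ᵥ (F ℓ) *ᵥ β))).mp h4 ℓ (Finset.mem_univ ℓ)
      have hnn : (0:ℝ) ≤ β ⬝ᵥ (F ℓ) *ᵥ β := by
        have := (hFpsd ℓ).dotProduct_mulVec_nonneg β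
        simpa using this
      have hq : β ⬝ᵥ (F ℓ) *ᵥ β = 0 := (Real.sqrt_eq_zero hnn).mp hsq
      have := ((hFpsd ℓ).dotProduct_mulVec_zero_iff β).mp (by simpa using hq)
      exact this
    apply hinj
    rw [map_zero]
    funext i
    rcases i with n | k | li
    · simpa [hM, Matrix.mulVecLin_apply, Matrix.mulVec, Matrix.of_apply] using hXβ n
    · simpa [hM, Matrix.mulVecLin_apply, Matrix.mulVec, Matrix.of_apply] using hdβ k
    · have := congrFun (hFβ li.1) li.2
      simpa [hM, Matrix.mulVecLin_apply, Matrix.mulVec, Matrix.of_apply] using this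
  obtain ⟨ε, hεpos, hεle⟩ := exists_pos_forall_mul_norm_le' hcont hnonneg hhom hzero
  -- integrable majorant
  have hMaj : Integrable (fun β : Fin p → ℝ =>
      c₀ * ∏ i, Real.exp (-(ε / p * |β i|))) volume := by
    refine (Integrable.fintype_prod (f := fun (_ : Fin p) (x : ℝ) =>
      Real.exp (-(ε / p * |x|))) (fun i => ?_)).const_mul c₀
    exact integrable_exp_neg_mul_abs' (div_pos hεpos (by exact_mod_cast i.pos))
  have hXcont : Continuous (fun β : Fin p → ℝ => X *ᵥ β) := by
    have := X.mulVecLin.continuous_of_finiteDimensional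
    exact this
  have hmeas : AEStronglyMeasurable (fun β : Fin p → ℝ =>
      Lik (X *ᵥ β) * Real.exp (-(lam * ((∑ k, |d k ⬝ᵥ β|) +
        ∑ ℓ, Real.sqrt (β ⬝ᵥ (F ℓ) *ᵥ β))))) volume := by
    apply Measurable.aestronglyMeasurable
    refine (hLik_meas.comp hXcont.measurable).mul ?_
    have hc : Continuous (fun β : Fin p → ℝ =>
        Real.exp (-(lam * ((∑ k, |d k ⬝ᵥ β|) + ∑ ℓ, Real.sqrt (β ⬝ᵥ (F ℓ) *ᵥ β))))) := by
      simp only [Matrix.mulVec, dotProduct]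
      fun_prop
    exact hc.measurable
  refine hMaj.mono' hmeas (Filter.Eventually.of_forall fun β => ?_)
  have hbnd1 : Lik (X *ᵥ β) * Real.exp (-(lam * ((∑ k, |d k ⬝ᵥ β|) +
      ∑ ℓ, Real.sqrt (β ⬝ᵥ (F ℓ) *ᵥ β)))) ≤ c₀ * Real.exp (-(f β)) := by
    calc Lik (X *ᵥ β) * Real.exp (-(lam * ((∑ k, |d k ⬝ᵥ β|) +
        ∑ ℓ, Real.sqrt (β ⬝ᵥ (F ℓ) *ᵥ β))))
        ≤ (c₀ * Real.exp (-(c₁ * Real.sqrt (∑ i, (X *ᵥ β) i ^ 2)))) *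
          Real.exp (-(lam * ((∑ k, |d k ⬝ᵥ β|) + ∑ ℓ, Real.sqrt (β ⬝ᵥ (F ℓ) *ᵥ β)))) :=
        mul_le_mul_of_nonneg_right (hENB _) (Real.exp_pos _).le
      _ = c₀ * Real.exp (-(f β)) := by
        rw [mul_assoc, ← Real.exp_add, hf]
        ring_nf
  have key : ε / p * ∑ i, |β i| ≤ ε * ‖β‖ := by
    rcases Nat.eq_zero_or_pos p with hp | hp
    · subst hp
      simp only [Finset.univ_eq_empty, Finset.sum_empty, mul_zero]
      positivity
    · have hsum : ∑ i, |β i| ≤ (p : ℝ) * ‖β‖ := by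
        calc ∑ i, |β i| ≤ ∑ _i : Fin p, ‖β‖ :=
            Finset.sum_le_sum (fun i _ => by
              rw [← Real.norm_eq_abs]; exact norm_le_pi_norm β i)
          _ = (p : ℝ) * ‖β‖ := by simp [Finset.sum_const, Finset.card_univ]
      calc ε / p * ∑ i, |β i| ≤ ε / p * ((p : ℝ) * ‖β‖) :=
          mul_le_mul_of_nonneg_left hsum (by positivity)
        _ = ε * ‖β‖ := by
          field_simp
  have hbnd2 : c₀ * Real.exp (-(f β)) ≤ c₀ * ∏ i, Real.exp (-(ε / p * |β i|)) := by
    rw [← Real.exp_sum]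
    apply mul_le_mul_of_nonneg_left _ hc₀.le
    apply Real.exp_le_exp.mpr
    have hsn : ∑ i, -(ε / p * |β i|) = -(ε / p * ∑ i, |β i|) := by
      simp [Finset.mul_sum]
    rw [hsn]
    exact neg_le_neg (key.trans (hεle β))
  rw [Real.norm_eq_abs, abs_of_nonneg (mul_nonneg (hLik_nonneg _) (Real.exp_pos _).le)]
  exact hbnd1.trans hbnd2
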